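/- Suppose every countable-chain-condition partial order has property K₃ (i.e., 𝒦₃-for-posets: every ccc poset has the Knaster property of dimension 3). Fix a coherent e : [ω₁]²→ω with (coh1)-(coh3), a tower T = {t_α : α < ω₁} and I ∈ [ω]^ω with t_α ∩ I_m ≠ ∅ for all α, m. Define π : [ω₁]³ → 2 by: for α < min{β,γ}, π(α,β,γ) = 0 iff (e(α,β) = e(α,γ) implies t_β ∩ I_{e(α,β)} ⊆ t_γ or t_γ ∩ I_{e(α,β)} ⊆ t_β). Then the poset ℋ₀^π of finite 0-homogeneous sets ordered by reverse inclusion is ccc. -/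

import Mathlib

noncomputable def omega1 : Ordinal.{0} := (Cardinal.aleph 1).ord

/-- `S` is 0-homogeneous for the coloring `π : [ω₁]³ → 2` defined from `e`, the tower `t`
and the interval decomposition given by `I`: for `α < β < γ` in `S`,
if `e(α,β) = e(α,γ)` then `t_β ∩ I_{e(α,β)} ⊆ t_γ` or `t_γ ∩ I_{e(α,β)} ⊆ t_β`. -/
def Homog3 (e : Ordinal → Ordinal → ℕ) (t : Ordinal → Set ℕ) (I : ℕ → ℕ)
    (S : Set Ordinal) : Prop :=
  ∀ α ∈ S, ∀ β ∈ S, ∀ γ ∈ S, α < β → β < γ → e α β = e α γ →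
    (t β ∩ Set.Ico (I (e α β)) (I (e α β + 1)) ⊆ t γ ∨
     t γ ∩ Set.Ico (I (e α β)) (I (e α β + 1)) ⊆ t β)

section Helpers

private lemma uncountable_fiber {X Y : Type*} [Countable Y] {S : Set X} (hS : ¬S.Countable)
    (f : X → Y) : ∃ y, ¬{x ∈ S | f x = y}.Countable := by
  by_contra h
  push_neg at h
  have hsub : S ⊆ ⋃ y : Y, {x ∈ S | f x = y} :=
    fun x hx => Set.mem_iUnion.2 ⟨f x, hx, rfl⟩
  exact hS (Set.Countable.mono hsub (Set.countable_iUnion h))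

private lemma nonempty_of_uncountable {X : Type*} {S : Set X} (hS : ¬S.Countable) :
    S.Nonempty :=
  Set.nonempty_iff_ne_empty.2 fun h => hS (h ▸ Set.countable_empty)

private lemma uncountable_diff {X : Type*} {S T : Set X} (hS : ¬S.Countable)
    (hT : T.Countable) : ¬(S \ T).Countable := fun h =>
  hS (Set.Countable.mono (fun x hx => by
    by_cases hxT : x ∈ T
    · exact Set.mem_union_right _ hxT
    · exact Set.mem_union_left _ ⟨hx, hxT⟩) (h.union hT))

private lemma countable_Iio_omega1 {δ : Ordinal.{0}} (h : δ < omega1) :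
    (Set.Iio δ).Countable := by
  rw [Cardinal.countable_iff_lt_aleph_one, Ordinal.mk_Iio_ordinal]
  exact Cardinal.lift_lt_aleph_one.2 (Cardinal.lt_ord.1 h)

private lemma lt_omega1_succ {x : Ordinal.{0}} (h : x < omega1) : x + 1 < omega1 := by
  rw [Ordinal.add_one_eq_succ]
  exact (Cardinal.isSuccLimit_ord (Cardinal.aleph0_le_aleph 1)).succ_lt h

private lemma self_lt_succ (x : Ordinal.{0}) : x < x + 1 := by
  rw [Ordinal.add_one_eq_succ]; exact Order.lt_succ x

private lemma countable_Iic_omega1 {r : Ordinal.{0}} (h : r < omega1) :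
    (Set.Iic r).Countable :=
  Set.Countable.mono (fun x hx => lt_of_le_of_lt hx (self_lt_succ r))
    (countable_Iio_omega1 (lt_omega1_succ h))

private lemma bound_lt_omega1 {C : Set Ordinal.{0}} (hC : C.Countable)
    (h : ∀ x ∈ C, x < omega1) : ∃ δ, δ < omega1 ∧ ∀ x ∈ C, x < δ := by
  rcases C.eq_empty_or_nonempty with rfl | hne
  · exact ⟨1, Ordinal.one_lt_of_isSuccLimit (Cardinal.isSuccLimit_ord (Cardinal.aleph0_le_aleph 1)), by simp⟩
  · obtain ⟨f, rfl⟩ := hC.exists_eq_range hne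
    refine ⟨iSup (fun n => f n + 1), (by have := (Ordinal.iSup_lt_omega_one (f := fun n : ℕ => f n + 1)
      (fun n => by have h' := lt_omega1_succ (h _ ⟨n, rfl⟩); rwa [omega1, Cardinal.ord_aleph] at h')); rwa [omega1, Cardinal.ord_aleph]), ?_⟩
    rintro x ⟨n, rfl⟩
    exact lt_of_lt_of_le (self_lt_succ (f n)) (Ordinal.le_iSup (fun n => f n + 1) n)

private lemma dc_finset_nat (S : Finset ℕ) (hdc : ∀ a b : ℕ, a ≤ b → b ∈ S → a ∈ S) :
    S = Finset.range S.card := by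
  rcases S.eq_empty_or_nonempty with h | h
  · simp [h]
  · have hS : S = Finset.range (S.max' h + 1) := by
      ext m
      simp only [Finset.mem_range, Nat.lt_succ_iff]
      exact ⟨fun hm => S.le_max' m hm, fun hm => hdc m _ hm (S.max'_mem h)⟩
    have hcard : S.card = S.max' h + 1 := by
      conv_lhs => rw [hS]
      rw [Finset.card_range]
    rw [hcard, ← hS]

private lemma pos_mem_iff {R F : Finset Ordinal} {N : ℕ} (hRF : R ⊆ F)
    (hdc : ∀ r ∈ R, ∀ y ∈ F, y ≤ r → y ∈ R) (hF : F.card = N) (q : Fin N) :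
    F.orderEmbOfFin hF q ∈ R ↔ (q : ℕ) < R.card := by
  classical
  set P : Finset (Fin N) := Finset.univ.filter (fun j => F.orderEmbOfFin hF j ∈ R) with hP
  have hmemP : ∀ j : Fin N, j ∈ P ↔ F.orderEmbOfFin hF j ∈ R := by
    intro j; simp [hP]
  have himg : P.image (F.orderEmbOfFin hF) = R := by
    apply Finset.Subset.antisymm
    · intro r hr
      obtain ⟨j, hj, rfl⟩ := Finset.mem_image.1 hr
      exact (hmemP j).1 hj
    · intro r hr
      obtain ⟨j, hj⟩ : ∃ j, F.orderEmbOfFin hF j = r := by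
        have : r ∈ Set.range (F.orderEmbOfFin hF) := by
          rw [Finset.range_orderEmbOfFin]
          exact hRF hr
        exact this
      exact Finset.mem_image.2 ⟨j, (hmemP j).2 (hj ▸ hr), hj⟩
  have hcardP : P.card = R.card := by
    rw [← himg, Finset.card_image_of_injective _ (F.orderEmbOfFin hF).injective]
  set P' : Finset ℕ := P.image Fin.val with hP'
  have hmemP' : ∀ a : ℕ, a ∈ P' ↔ ∃ j ∈ P, (j : ℕ) = a := by
    intro a; simp [hP']
  have hdc' : ∀ a b : ℕ, a ≤ b → b ∈ P' → a ∈ P' := by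
    intro a b hab hb
    obtain ⟨j, hj, hjv⟩ := (hmemP' b).1 hb
    have haN : a < N := lt_of_le_of_lt (by omega) j.isLt
    refine (hmemP' a).2 ⟨⟨a, haN⟩, ?_, rfl⟩
    refine (hmemP _).2 ?_
    have hmono : F.orderEmbOfFin hF ⟨a, haN⟩ ≤ F.orderEmbOfFin hF j := by
      apply (F.orderEmbOfFin hF).monotone
      rw [Fin.le_def]
      simpa using by omega
    exact hdc _ ((hmemP j).1 hj) _ (Finset.orderEmbOfFin_mem F hF _) hmono
  have h1 := dc_finset_nat P' hdc'
  have hcard' : P'.card = R.card := by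
    rw [hP', Finset.card_image_of_injective _ Fin.val_injective, hcardP]
  rw [hcard'] at h1
  constructor
  · intro h
    have : (q : ℕ) ∈ P' := (hmemP' _).2 ⟨q, (hmemP q).2 h, rfl⟩
    rw [h1] at this
    exact Finset.mem_range.1 this
  · intro h
    have hq : (q : ℕ) ∈ P' := by rw [h1]; exact Finset.mem_range.2 h
    obtain ⟨j, hj, hjv⟩ := (hmemP' _).1 hq
    have hjq : j = q := Fin.ext hjv
    exact (hmemP q).1 (hjq ▸ hj)

private lemma finite_pre (e : Ordinal → Ordinal → ℕ) {β : Ordinal}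
    (hinj : Set.InjOn (fun α => e α β) (Set.Iio β)) {B : Set ℕ} (hB : B.Finite) :
    {a : Ordinal | a < β ∧ e a β ∈ B}.Finite := by
  apply Set.Finite.of_finite_image (f := fun a => e a β)
  · exact hB.subset (by rintro _ ⟨a, ⟨_, h2⟩, rfl⟩; exact h2)
  · exact hinj.mono fun a ha => ha.1

private lemma finite_B (t : Ordinal → Set ℕ) (I : ℕ → ℕ) (hI : StrictMono I)
    {β γ : Ordinal} (hfin : (t γ \ t β).Finite) :
    {m : ℕ | ((t γ \ t β) ∩ Set.Ico (I m) (I (m + 1))).Nonempty}.Finite := by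
  classical
  have hw : ∀ m ∈ {m : ℕ | ((t γ \ t β) ∩ Set.Ico (I m) (I (m + 1))).Nonempty},
      ∃ n, n ∈ t γ \ t β ∧ I m ≤ n ∧ n < I (m + 1) := by
    intro m hm
    obtain ⟨n, hn1, hn2⟩ := hm
    exact ⟨n, hn1, hn2.1, hn2.2⟩
  choose! w hw1 hw2 hw3 using hw
  apply Set.Finite.of_finite_image (f := w)
  · exact hfin.subset (by rintro _ ⟨m, hm, rfl⟩; exact hw1 m hm)
  · intro m hm m' hm' hww
    by_contra hne
    have key : ∀ a b : ℕ, a < b →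
        a ∈ {m : ℕ | ((t γ \ t β) ∩ Set.Ico (I m) (I (m + 1))).Nonempty} →
        b ∈ {m : ℕ | ((t γ \ t β) ∩ Set.Ico (I m) (I (m + 1))).Nonempty} →
        w a = w b → False := by
      intro a b hab ha hb hwab
      have h1 : I (a + 1) ≤ I b := hI.monotone (by omega)
      have h2 := hw3 a ha
      have h3 := hw2 b hb
      omega
    rcases lt_or_gt_of_ne hne with hlt | hgt
    · exact key m m' hlt hm hm' hww
    · exact key m' m hgt hm' hm hww.symm

end Helpers

/-- Assume every ccc poset has property K₃, let `e` satisfy (coh1)-(coh3) (hence be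
coherent), let `t` be a tower and `I ∈ [ω]^ω` with `t_α ∩ I_m ≠ ∅` for all `α, m`. Then
the poset `ℋ₀^π` of finite 0-homogeneous sets (for the coloring `π` above) ordered by
reverse inclusion is ccc: among uncountably many finite 0-homogeneous subsets of `ω₁`
there are two distinct ones whose union is 0-homogeneous. -/
theorem tower_coloring_ccc
    (hK3 : ∀ (Q : Type 1) [PartialOrder Q],
      (∀ X : Set Q, ¬X.Countable → ∃ p ∈ X, ∃ q ∈ X, p ≠ q ∧ ∃ r, r ≤ p ∧ r ≤ q) →
      ∀ X : Set Q, ¬X.Countable → ∃ Y ⊆ X, ¬Y.Countable ∧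
        ∀ s : Finset Q, ↑s ⊆ Y → s.card ≤ 3 → ∃ r, ∀ q ∈ s, r ≤ q)
    (e : Ordinal → Ordinal → ℕ)
    (coh1 : ∀ β, β < omega1 → Set.InjOn (fun α => e α β) (Set.Iio β))
    (coh2 : ∀ α β γ : Ordinal, α < β → β < γ → γ < omega1 →
      e α β ≠ e α γ → max (e α β) (e α γ) ≤ e β γ)
    (coh3 : ∀ α β γ : Ordinal, α < β → β < γ → γ < omega1 → e α β ≠ e β γ)
    (hcoh : ∀ β γ : Ordinal, β < γ → γ < omega1 →
      {ξ : Ordinal | ξ < β ∧ e ξ β ≠ e ξ γ}.Finite)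
    (t : Ordinal → Set ℕ)
    (htinf : ∀ α, α < omega1 → (t α).Infinite)
    (htower : ∀ α β : Ordinal, α < β → β < omega1 → (t β \ t α).Finite)
    (I : ℕ → ℕ) (hI : StrictMono I)
    (hmeet : ∀ α, α < omega1 → ∀ m : ℕ, (t α ∩ Set.Ico (I m) (I (m + 1))).Nonempty) :
    ∀ 𝒜 : Set (Finset Ordinal),
      (∀ F ∈ 𝒜, (↑F : Set Ordinal) ⊆ Set.Iio omega1 ∧ Homog3 e t I ↑F) →
      ¬𝒜.Countable →
      ∃ F ∈ 𝒜, ∃ G ∈ 𝒜, F ≠ G ∧ Homog3 e t I (↑F ∪ ↑G) := by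
  intro 𝒜 h𝒜 hunc
  classical
  -- Step 1: stabilize the cardinality
  obtain ⟨N, h𝒜₁⟩ := uncountable_fiber hunc Finset.card
  set 𝒜₁ : Set (Finset Ordinal) := {F ∈ 𝒜 | Finset.card F = N} with h𝒜₁def
  -- Step 2: maximal root
  set 𝒮 : Set ℕ := {k | ∃ R : Finset Ordinal, R.card = k ∧ ¬{F ∈ 𝒜₁ | R ⊆ F}.Countable}
    with h𝒮def
  have h0 : 0 ∈ 𝒮 := by
    refine ⟨∅, Finset.card_empty, ?_⟩
    have : {F ∈ 𝒜₁ | (∅ : Finset Ordinal) ⊆ F} = 𝒜₁ := by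
      ext F; simp
    rw [this]; exact h𝒜₁
  have hbddS : ∀ k ∈ 𝒮, k ≤ N := by
    rintro k ⟨R, rfl, hRunc⟩
    obtain ⟨F, hF⟩ := nonempty_of_uncountable hRunc
    have := Finset.card_le_card hF.2
    rwa [hF.1.2] at this
  have hk : sSup 𝒮 ∈ 𝒮 := Nat.sSup_mem ⟨0, h0⟩ ⟨N, fun k hk => hbddS k hk⟩
  obtain ⟨R, hRcard, hRunc⟩ := hk
  set 𝒜₂ : Set (Finset Ordinal) := {F ∈ 𝒜₁ | R ⊆ F} with h𝒜₂def
  have hmax : ∀ γ : Ordinal, γ ∉ R → {F ∈ 𝒜₂ | γ ∈ F}.Countable := by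
    intro γ hγ
    by_contra hcon
    have hmem : R.card + 1 ∈ 𝒮 := by
      refine ⟨insert γ R, by rw [Finset.card_insert_of_notMem hγ], ?_⟩
      intro hcnt
      apply hcon
      apply Set.Countable.mono _ hcnt
      rintro F ⟨⟨hF1, hF2⟩, hF3⟩
      exact ⟨hF1, Finset.insert_subset hF3 hF2⟩
    have := le_csSup ⟨N, fun k hk => hbddS k hk⟩ hmem
    omega
  -- Step 3: tails above the root
  have hR𝒜₂ : ∀ F ∈ 𝒜₂, F ∈ 𝒜 ∧ F.card = N ∧ R ⊆ F := fun F hF => ⟨hF.1.1, hF.1.2, hF.2⟩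
  have hRlt : ∀ r ∈ R, (r : Ordinal) < omega1 := by
    obtain ⟨F, hF⟩ := nonempty_of_uncountable hRunc
    intro r hr
    exact (h𝒜 F hF.1.1).1 (hF.2 hr)
  set C₀ : Set Ordinal := ⋃ r ∈ (↑R : Set Ordinal), Set.Iic r with hC₀def
  have hC₀ : C₀.Countable :=
    Set.Countable.biUnion R.countable_toSet (fun r hr => countable_Iic_omega1 (hRlt r hr))
  set bad₃ : Set (Finset Ordinal) := ⋃ γ ∈ C₀ \ ↑R, {F ∈ 𝒜₂ | γ ∈ F} with hbad₃def
  have hbad₃ : bad₃.Countable :=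
    Set.Countable.biUnion (Set.Countable.mono Set.diff_subset hC₀)
      (fun γ hγ => hmax γ hγ.2)
  set 𝒜₃ : Set (Finset Ordinal) := 𝒜₂ \ bad₃ with h𝒜₃def
  have h𝒜₃unc : ¬𝒜₃.Countable := uncountable_diff hRunc hbad₃
  have h𝒜₃tl : ∀ F ∈ 𝒜₃, ∀ y ∈ F, y ∉ R → ∀ r ∈ R, r < y := by
    rintro F ⟨hF2, hFb⟩ y hy hyR r hr
    by_contra hcon
    push_neg at hcon
    apply hFb
    refine Set.mem_biUnion (show y ∈ C₀ \ ↑R from ⟨Set.mem_biUnion hr hcon, hyR⟩) ?_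
    exact ⟨hF2, hy⟩
  -- Step 4: stabilize the internal e-values
  set Mf : Finset Ordinal → Finset ℕ :=
    fun F => ((F ×ˢ F).filter fun p => p.1 < p.2).image fun p => e p.1 p.2 with hMfdef
  obtain ⟨M, h𝒜₄⟩ := uncountable_fiber h𝒜₃unc Mf
  set 𝒜₄ : Set (Finset Ordinal) := {F ∈ 𝒜₃ | Mf F = M} with h𝒜₄def
  set K : ℕ := M.sup id + 1 with hKdef
  have hMK : ∀ m ∈ M, m < K := fun m hm => Nat.lt_succ_of_le (Finset.le_sup (f := id) hm)
  -- Step 5: stabilize rows and traces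
  set frow : Finset Ordinal → (Fin R.card → Fin N → ℕ) := fun F =>
    if h : F.card = N then fun p q => e (R.orderEmbOfFin rfl p) (F.orderEmbOfFin h q)
    else fun _ _ => 0 with hfrowdef
  obtain ⟨ρ, h𝒜₅'⟩ := uncountable_fiber h𝒜₄ frow
  set 𝒜₅' : Set (Finset Ordinal) := {F ∈ 𝒜₄ | frow F = ρ} with h𝒜₅'def
  set ftr : Finset Ordinal → (Fin N → Fin K → Finset ℕ) := fun F =>
    if h : F.card = N then fun q k =>
      (((Set.finite_Ico (I k) (I (k + 1)))).subset Set.inter_subset_right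
        : (t (F.orderEmbOfFin h q) ∩ Set.Ico (I (k : ℕ)) (I ((k : ℕ) + 1))).Finite).toFinset
    else fun _ _ => ∅ with hftrdef
  obtain ⟨τ, h𝒜₅⟩ := uncountable_fiber h𝒜₅' ftr
  set 𝒜₅ : Set (Finset Ordinal) := {F ∈ 𝒜₅' | ftr F = τ} with h𝒜₅def
  have hmem : ∀ F ∈ 𝒜₅, F ∈ 𝒜 ∧ F.card = N ∧ R ⊆ F ∧
      (∀ y ∈ F, y ∉ R → ∀ r ∈ R, r < y) ∧ Mf F = M ∧ frow F = ρ ∧ ftr F = τ := by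
    rintro F ⟨⟨⟨hF3, hFM⟩, hFrow⟩, hFtr⟩
    exact ⟨hF3.1.1.1, hF3.1.1.2, hF3.1.2, h𝒜₃tl F hF3, hFM, hFrow, hFtr⟩
  have h𝒜₅sub₂ : ∀ F, F ∈ 𝒜₅ → F ∈ 𝒜₂ := fun F hF => hF.1.1.1.1
  -- R is a proper subset of every member
  have hRN : R.card < N := by
    rcases lt_or_ge R.card N with h | h
    · exact h
    · exfalso
      apply h𝒜₅
      apply Set.Countable.mono _ (Set.countable_singleton R)
      intro F hF
      obtain ⟨_, hcard, hsub, _⟩ := hmem F hF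
      have : R = F := Finset.eq_of_subset_of_card_le hsub (by omega)
      simp [← this]
  -- selection function
  have hselex : ∀ Cs : Set Ordinal, ∃ F, Cs.Countable →
      F ∈ 𝒜₅ ∧ ((↑F : Set Ordinal) \ ↑R) ∩ Cs = ∅ := by
    intro Cs
    by_cases hCs : Cs.Countable
    · set badF : Set (Finset Ordinal) := ⋃ γ ∈ Cs \ ↑R, {F ∈ 𝒜₂ | γ ∈ F} with hbadFdef
      have hbadF : badF.Countable :=
        Set.Countable.biUnion (Set.Countable.mono Set.diff_subset hCs)
          (fun γ hγ => hmax γ hγ.2)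
      obtain ⟨F, hF1, hF2⟩ := nonempty_of_uncountable (uncountable_diff h𝒜₅ hbadF)
      refine ⟨F, fun _ => ⟨hF1, ?_⟩⟩
      rw [Set.eq_empty_iff_forall_notMem]
      rintro x ⟨⟨hxF, hxR⟩, hxC⟩
      exact hF2 (Set.mem_biUnion (show x ∈ Cs \ ↑R from ⟨hxC, hxR⟩) ⟨h𝒜₅sub₂ F hF1, hxF⟩)
    · exact ⟨∅, fun h => absurd h hCs⟩
  choose sel hselspec using hselex
  -- recursion
  set s : ℕ → Finset Ordinal := fun k => Nat.rec ∅ (fun _ sk => sk ∪ sel ↑sk) k with hsdef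
  set g : ℕ → Finset Ordinal := fun k => sel ↑(s k) with hgdef
  have hspec : ∀ k, g k ∈ 𝒜₅ ∧ ((↑(g k) : Set Ordinal) \ ↑R) ∩ ↑(s k) = ∅ :=
    fun k => hselspec _ (s k).countable_toSet
  have hsucc : ∀ k, s (k + 1) = s k ∪ g k := fun k => rfl
  have hmono : ∀ i k, i ≤ k → s i ⊆ s k := by
    intro i k hik
    induction k with
    | zero => rw [Nat.le_zero.1 hik]
    | succ k ih =>
      rcases Nat.lt_or_ge i (k + 1) with h | h
      · refine (ih (by omega)).trans ?_
        rw [hsucc]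
        exact Finset.subset_union_left
      · rw [Nat.le_antisymm hik h]
  have hgs : ∀ i k, i < k → g i ⊆ s k := by
    intro i k hik
    refine Finset.Subset.trans ?_ (hmono (i + 1) k hik)
    rw [hsucc]
    exact Finset.subset_union_right
  set CC : Set Ordinal := ⋃ k, ((s k : Set Ordinal)) with hCCdef
  have hCCc : CC.Countable := Set.countable_iUnion fun k => (s k).countable_toSet
  have hslt : ∀ k, ∀ x ∈ s k, (x : Ordinal) < omega1 := by
    intro k
    induction k with
    | zero => simp [hsdef]
    | succ k ih =>
      intro x hx
      rw [hsucc] at hx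
      rcases Finset.mem_union.1 hx with h | h
      · exact ih x h
      · exact (h𝒜 _ (hmem _ (hspec k).1).1).1 h
  obtain ⟨δ, hδ1, hδ2⟩ := bound_lt_omega1 hCCc (by
    rintro x hx
    obtain ⟨_, ⟨k, rfl⟩, hx⟩ := hx
    exact hslt k x hx)
  -- the top element H
  set H : Finset Ordinal := sel (Set.Iio δ) with hHdef
  obtain ⟨hH𝒜₅, hHtail⟩ := hselspec (Set.Iio δ) (countable_Iio_omega1 hδ1)
  obtain ⟨hH𝒜, hHcard, hHR, hHtl, hHM, hHrow, hHtr⟩ := hmem H hH𝒜₅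
  have hHlt : ∀ x ∈ H, (x : Ordinal) < omega1 := fun x hx => (h𝒜 H hH𝒜).1 hx
  -- the finite bad sets Z and D
  set Z : Set Ordinal := ⋃ x ∈ (↑H : Set Ordinal), {a | a < x ∧ e a x ∈ (↑M : Set ℕ)}
    with hZdef
  have hZfin : Z.Finite :=
    H.finite_toSet.biUnion fun x hx => finite_pre e (coh1 x (hHlt x hx)) M.finite_toSet
  set D : Set Ordinal := ⋃ b ∈ (↑H : Set Ordinal), ⋃ c ∈ (↑H : Set Ordinal),
      {a | b < c ∧ a < b ∧
        e a b ∈ {m | ((t c \ t b) ∩ Set.Ico (I m) (I (m + 1))).Nonempty}} with hDdef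
  have hDfin : D.Finite := by
    refine H.finite_toSet.biUnion fun b hb => H.finite_toSet.biUnion fun c hc => ?_
    by_cases hbc : b < c
    · refine Set.Finite.subset (finite_pre e (coh1 b (hHlt b hb))
        (finite_B t I hI (htower b c hbc (hHlt c hc)))) ?_
      rintro a ⟨_, h2, h3⟩
      exact ⟨h2, h3⟩
    · refine Set.Finite.subset Set.finite_empty ?_
      rintro a ⟨h1, _⟩
      exact absurd h1 hbc
  -- choose a good lower member G
  have hiex : ∃ i : ℕ, ((↑(g i) : Set Ordinal) \ ↑R) ∩ (Z ∪ D) = ∅ := by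
    by_contra hcon
    push_neg at hcon
    choose pt hpt using hcon
    have hdisj : ∀ i j : ℕ, i < j → pt i ≠ pt j := by
      intro i j hij hEq
      have h1 : pt j ∈ ((↑(g j) : Set Ordinal) \ ↑R) ∩ ↑(s j) := by
        refine ⟨(hpt j).1, ?_⟩
        rw [← hEq]
        exact_mod_cast hgs i j hij (hpt i).1.1
      rw [(hspec j).2] at h1
      exact h1
    have hptinj : Function.Injective pt := by
      intro i j hEq
      by_contra hne'
      rcases lt_or_gt_of_ne hne' with h | h
      · exact hdisj i j h hEq
      · exact hdisj j i h hEq.symm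
    exact (Set.infinite_of_injective_forall_mem hptinj fun i => (hpt i).2)
      (hZfin.union hDfin)
  obtain ⟨i, hi⟩ := hiex
  set G : Finset Ordinal := g i with hGdef
  obtain ⟨hG𝒜, hGcard, hGR, hGtl, hGM, hGrow, hGtr⟩ := hmem G (hspec i).1
  have hGδ : ∀ x ∈ G, (x : Ordinal) < δ := by
    intro x hx
    refine hδ2 x (Set.mem_iUnion.2 ⟨i + 1, ?_⟩)
    exact_mod_cast hgs i (i + 1) (Nat.lt_succ_self i) hx
  have hHtailδ : ∀ y ∈ H, y ∉ R → δ ≤ y := by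
    intro y hy hyR
    by_contra h
    push_neg at h
    have : y ∈ ((↑H : Set Ordinal) \ ↑R) ∩ Set.Iio δ := ⟨⟨hy, hyR⟩, h⟩
    rw [hHtail] at this
    exact this
  have hGH : ∀ y ∈ H, y ∉ R → ∀ x ∈ G, x < y :=
    fun y hy hyR x hx => lt_of_lt_of_le (hGδ x hx) (hHtailδ y hy hyR)
  have hGZD : ∀ a ∈ G, a ∉ R → a ∉ Z ∧ a ∉ D := by
    intro a ha haR
    constructor <;> intro h
    · have : a ∈ ((↑G : Set Ordinal) \ ↑R) ∩ (Z ∪ D) := ⟨⟨ha, haR⟩, Or.inl h⟩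
      rw [hi] at this; exact this
    · have : a ∈ ((↑G : Set Ordinal) \ ↑R) ∩ (Z ∪ D) := ⟨⟨ha, haR⟩, Or.inr h⟩
      rw [hi] at this; exact this
  -- G ≠ H
  have hGne : G ≠ H := by
    have hRG : R ≠ G := by
      intro h
      rw [h, hGcard] at hRN
      exact lt_irrefl N hRN
    obtain ⟨y, hyG, hyR⟩ := Finset.exists_of_ssubset (ssubset_iff_subset_ne.2 ⟨hGR, hRG⟩)
    intro hEq
    have := hHtailδ y (by rw [← hEq]; exact hyG) hyR
    exact absurd (hGδ y hyG) (not_lt.2 this)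
  -- dc property for the position lemma
  have hGdc : ∀ r ∈ R, ∀ y ∈ G, y ≤ r → y ∈ R := by
    intro r hr y hy hyr
    by_contra hyR
    exact absurd hyr (not_le.2 (hGtl y hy hyR r hr))
  have hHdc : ∀ r ∈ R, ∀ y ∈ H, y ≤ r → y ∈ R := by
    intro r hr y hy hyr
    by_contra hyR
    exact absurd hyr (not_le.2 (hHtl y hy hyR r hr))
  -- final verification
  refine ⟨G, hG𝒜, H, hH𝒜, hGne, ?_⟩
  have homG : Homog3 e t I ↑G := (h𝒜 G hG𝒜).2
  have homH : Homog3 e t I ↑H := (h𝒜 H hH𝒜).2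
  intro α hα β hβ γ hγ hαβ hβγ heq
  by_cases hγG : γ ∈ G
  · -- everything is inside G
    have hβG : β ∈ G := by
      rcases hβ with h | h
      · exact h
      · by_cases hβR : β ∈ R
        · exact hGR hβR
        · exact absurd (hGH β h hβR γ hγG) (not_lt.2 hβγ.le)
    have hαG : α ∈ G := by
      rcases hα with h | h
      · exact h
      · by_cases hαR : α ∈ R
        · exact hGR hαR
        · exact absurd (hGH α h hαR γ hγG) (not_lt.2 (hαβ.trans hβγ).le)
    exact homG α hαG β hβG γ hγG hαβ hβγ heq
  · have hγH : γ ∈ H := by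
      rcases hγ with h | h
      · exact absurd h hγG
      · exact h
    have hγR : γ ∉ R := fun h => hγG (hGR h)
    by_cases hβH : β ∈ H
    · by_cases hαH : α ∈ H
      · exact homH α hαH β hβH γ hγH hαβ hβγ heq
      · -- α ∈ G \ R : type A, use D
        have hαG : α ∈ G := by
          rcases hα with h | h
          · exact h
          · exact absurd h hαH
        have hαR : α ∉ R := fun h => hαH (hHR h)
        by_cases hBne : ((t γ \ t β) ∩ Set.Ico (I (e α β)) (I (e α β + 1))).Nonempty
        · exfalso
          apply (hGZD α hαG hαR).2
          exact Set.mem_biUnion hβH (Set.mem_biUnion hγH ⟨hβγ, hαβ, hBne⟩)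
        · right
          intro x hx
          by_contra hxβ
          exact hBne ⟨x, ⟨hx.1, hxβ⟩, hx.2⟩
    · -- main case : β ∈ G, γ ∈ H \ R
      have hβG : β ∈ G := by
        rcases hβ with h | h
        · exact h
        · exact absurd h hβH
      have hαG : α ∈ G := by
        rcases hα with h | h
        · exact h
        · by_cases hαR : α ∈ R
          · exact hGR hαR
          · exact absurd (hGH α h hαR β hβG) (not_lt.2 hαβ.le)
      have hmM : e α β ∈ M := by
        rw [← hGM, hMfdef]
        exact Finset.mem_image.2 ⟨(α, β),
          Finset.mem_filter.2 ⟨Finset.mem_product.2 ⟨hαG, hβG⟩, hαβ⟩, rfl⟩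
      by_cases hαR : α ∈ R
      · -- the position argument
        obtain ⟨q, hq⟩ : ∃ q : Fin N, H.orderEmbOfFin hHcard q = γ := by
          have : γ ∈ Set.range (H.orderEmbOfFin hHcard) := by
            rw [Finset.range_orderEmbOfFin]
            exact hγH
          exact this
        have hqR : ¬((q : ℕ) < R.card) := by
          intro h
          exact hγR (hq ▸ (pos_mem_iff hHR hHdc hHcard q).2 h)
        set β' : Ordinal := G.orderEmbOfFin hGcard q with hβ'def
        have hβ'G : β' ∈ G := Finset.orderEmbOfFin_mem G hGcard q
        have hβ'R : β' ∉ R := fun h => hqR ((pos_mem_iff hGR hGdc hGcard q).1 h)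
        have hαβ' : α < β' := hGtl β' hβ'G hβ'R α hαR
        obtain ⟨p, hp⟩ : ∃ p : Fin R.card, R.orderEmbOfFin rfl p = α := by
          have : α ∈ Set.range (R.orderEmbOfFin rfl) := by
            rw [Finset.range_orderEmbOfFin]
            exact hαR
          exact this
        have hrow : e α β' = e α γ := by
          have h1 : frow G p q = frow H p q := by rw [hGrow, hHrow]
          rw [hfrowdef] at h1
          simp only [dif_pos hGcard, dif_pos hHcard] at h1
          rw [hp, hq] at h1
          exact h1
        have em' : e α β' = e α β := by rw [hrow, ← heq]
        have hmK : (e α β) < K := hMK _ hmM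
        have htrace : t β' ∩ Set.Ico (I (e α β)) (I (e α β + 1)) =
            t γ ∩ Set.Ico (I (e α β)) (I (e α β + 1)) := by
          have h1 : ftr G q ⟨e α β, hmK⟩ = ftr H q ⟨e α β, hmK⟩ := by rw [hGtr, hHtr]
          rw [hftrdef] at h1
          simp only [dif_pos hGcard, dif_pos hHcard] at h1
          rw [Set.Finite.toFinset_inj] at h1
          rw [hq] at h1
          exact h1
        by_cases hββ' : β = β'
        · left
          intro x hx
          have hx' : x ∈ t γ ∩ Set.Ico (I (e α β)) (I (e α β + 1)) := by
            rw [← htrace, ← hββ']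
            exact hx
          exact hx'.1
        · rcases lt_or_gt_of_ne hββ' with hlt | hgt
          · have hcomp := homG α hαG β hβG β' hβ'G hαβ hlt em'.symm
            rcases hcomp with h | h
            · left
              intro x hx
              have hx' : x ∈ t β' ∩ Set.Ico (I (e α β)) (I (e α β + 1)) := ⟨h hx, hx.2⟩
              rw [htrace] at hx'
              exact hx'.1
            · right
              intro x hx
              rw [← htrace] at hx
              exact h hx
          · have hcomp := homG α hαG β' hβ'G β hβG hαβ' hgt em'
            rw [em'] at hcomp
            rcases hcomp with h | h
            · right
              intro x hx
              rw [← htrace] at hx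
              exact h hx
            · left
              intro x hx
              have hx' : x ∈ t β' ∩ Set.Ico (I (e α β)) (I (e α β + 1)) := ⟨h hx, hx.2⟩
              rw [htrace] at hx'
              exact hx'.1
      · -- α ∈ G \ R : use Z
        exfalso
        apply (hGZD α hαG hαR).1
        refine Set.mem_biUnion hγH ⟨hαβ.trans hβγ, ?_⟩
        rw [← heq]
        exact_mod_cast hmM
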